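/- Let I ⊂ S = k[x_1,...,x_n] be an Artinian monomial ideal and A = S/I. Then A has the weak Lefschetz property if and only if ℓ = x_1 + x_2 + ··· + x_n is a Lefschetz element for A (i.e., multiplication by ℓ has maximal rank in every degree). -/

import Mathlib

open MvPolynomial

/-- The degree-`j` graded component of `S/I`: the image in `S/I` of the degree-`j`
homogeneous component of `S = K[x_1,…,x_n]`. -/
noncomputable def gradedPiece (K : Type*) [Field K] {n : ℕ}
    (I : Ideal (MvPolynomial (Fin n) K)) (j : ℕ) :
    Submodule K (MvPolynomial (Fin n) K ⧸ I) :=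
  Submodule.map (Ideal.Quotient.mkₐ K I).toLinearMap
    (MvPolynomial.homogeneousSubmodule (Fin n) K j)

/-- Multiplication by (the class of) `L` on `S/I` has maximal rank in every degree:
each map `[A]_j → [A]_{j+1}` is injective or surjective. -/
def maxRank (K : Type*) [Field K] {n : ℕ} (I : Ideal (MvPolynomial (Fin n) K))
    (L : MvPolynomial (Fin n) K) : Prop :=
  ∀ j : ℕ,
    (∀ x ∈ gradedPiece K I j, Ideal.Quotient.mk I L * x = 0 → x = 0) ∨
    Submodule.map (LinearMap.mulLeft K (Ideal.Quotient.mk I L)) (gradedPiece K I j)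
      = gradedPiece K I (j + 1)


lemma degree_one_single {n : ℕ} {m : Fin n →₀ ℕ} (h : Finsupp.degree m = 1) :
    ∃ i, m = Finsupp.single i 1 := by
  have hm : m ≠ 0 := by rintro rfl; simp [Finsupp.degree] at h
  obtain ⟨i, hi⟩ := Finsupp.support_nonempty_iff.mpr hm
  refine ⟨i, ?_⟩
  have hmi : m i ≠ 0 := Finsupp.mem_support_iff.mp hi
  have h1 : m i ≤ 1 := by
    rw [← h]; exact Finset.single_le_sum (f := fun j => m j) (fun _ _ => Nat.zero_le _) hi
  have hmi1 : m i = 1 := le_antisymm h1 (Nat.one_le_iff_ne_zero.mpr hmi)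
  ext j
  rcases eq_or_ne j i with rfl | hj
  · simp [hmi1]
  · rw [Finsupp.single_apply, if_neg (Ne.symm hj)]
    by_contra hj0
    have hjs : j ∈ m.support := Finsupp.mem_support_iff.mpr hj0
    have : 2 ≤ Finsupp.degree m := by
      have := Finset.add_sum_erase _ (fun j => m j) hjs
      have hie : i ∈ m.support.erase j := Finset.mem_erase.mpr ⟨(Ne.symm hj), hi⟩
      have h2 : m i ≤ ∑ k ∈ m.support.erase j, m k :=
        Finset.single_le_sum (f := fun k => m k) (fun _ _ => Nat.zero_le _) hie
      have : 1 + 1 ≤ m j + ∑ k ∈ m.support.erase j, m k :=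
        Nat.add_le_add (Nat.one_le_iff_ne_zero.mpr hj0) (hmi1 ▸ h2)
      calc (2:ℕ) = 1 + 1 := rfl
        _ ≤ m j + ∑ k ∈ m.support.erase j, m k := this
        _ = Finsupp.degree m := Finset.add_sum_erase _ (fun j => m j) hjs
    omega

lemma linear_decomp {K : Type*} [Field K] {n : ℕ} {L : MvPolynomial (Fin n) K}
    (hL : L ∈ homogeneousSubmodule (Fin n) K 1) :
    L = ∑ i : Fin n, (coeff (Finsupp.single i 1) L) • X i := by
  have hLh : L.IsHomogeneous 1 := hL
  ext m
  rw [coeff_sum]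
  rcases eq_or_ne (Finsupp.degree m) 1 with hd | hd
  · obtain ⟨i, rfl⟩ := degree_one_single hd
    rw [Finset.sum_eq_single i]
    · simp [coeff_smul, coeff_X']
    · intro b _ hb
      simp only [coeff_smul, coeff_X', X, coeff_monomial]
      rw [if_neg, smul_zero]
      intro hcontra
      exact hb (by
        have := Finsupp.single_left_injective (one_ne_zero) hcontra
        exact this)
    · simp
  · have h0 : coeff m L = 0 := by
      by_contra hc
      exact hd (by rw [Finsupp.degree_eq_weight_one]; exact hLh hc)
    rw [h0]
    symm
    apply Finset.sum_eq_zero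
    intro i _
    simp only [coeff_smul, coeff_X', X, coeff_monomial]
    rw [if_neg, smul_zero]
    rintro rfl
    exact hd (by simp [Finsupp.degree_single])

section
variable {K : Type*} [Field K] {n : ℕ} {I : Ideal (MvPolynomial (Fin n) K)}

lemma mem_gradedPiece_iff {j : ℕ} {x : MvPolynomial (Fin n) K ⧸ I} :
    x ∈ gradedPiece K I j ↔ ∃ p : MvPolynomial (Fin n) K,
      p.IsHomogeneous j ∧ Ideal.Quotient.mk I p = x := by
  simp only [gradedPiece, Submodule.mem_map, mem_homogeneousSubmodule]
  rfl

lemma mul_mem_gradedPiece {j : ℕ} {L : MvPolynomial (Fin n) K}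
    (hL : L.IsHomogeneous 1) {x : MvPolynomial (Fin n) K ⧸ I}
    (hx : x ∈ gradedPiece K I j) :
    Ideal.Quotient.mk I L * x ∈ gradedPiece K I (j + 1) := by
  obtain ⟨p, hp, rfl⟩ := mem_gradedPiece_iff.mp hx
  refine mem_gradedPiece_iff.mpr ⟨L * p, ?_, by rw [map_mul]⟩
  have := hL.mul hp
  rwa [Nat.add_comm 1 j] at this

lemma map_mulLeft_le {j : ℕ} {L : MvPolynomial (Fin n) K} (hL : L.IsHomogeneous 1) :
    Submodule.map (LinearMap.mulLeft K (Ideal.Quotient.mk I L)) (gradedPiece K I j)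
      ≤ gradedPiece K I (j + 1) := by
  rintro x ⟨y, hy, rfl⟩
  exact mul_mem_gradedPiece hL hy

/-- In a finite-dimensional monomial quotient, a power of each variable lies in `I`. -/
lemma exists_pow_mem (s : Set (Fin n →₀ ℕ))
    (hI : I = Ideal.span ((fun b => MvPolynomial.monomial b (1 : K)) '' s))
    (hart : FiniteDimensional K (MvPolynomial (Fin n) K ⧸ I)) (i : Fin n) :
    ∃ d : ℕ, (X i : MvPolynomial (Fin n) K) ^ d ∈ I := by
  have : Algebra.IsIntegral K (MvPolynomial (Fin n) K ⧸ I) :=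
    Algebra.IsIntegral.of_finite K _
  obtain ⟨q, hq, hq0⟩ := Algebra.IsIntegral.isIntegral
    (R := K) (Ideal.Quotient.mk I (X i))
  set d := q.natDegree with hd
  set p : MvPolynomial (Fin n) K := Polynomial.aeval (X i) q with hp
  have hpI : p ∈ I := by
    have h1 : Ideal.Quotient.mk I p = Polynomial.aeval (Ideal.Quotient.mk I (X i)) q := by
      have := Polynomial.aeval_algHom_apply (Ideal.Quotient.mkₐ K I) (X i) q
      rw [hp]
      simpa [Ideal.Quotient.mkₐ_eq_mk] using this.symm
    rw [← Ideal.Quotient.eq_zero_iff_mem, h1, Polynomial.aeval_def]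
    exact hq0
  -- coefficient of `single i d` in `p` is 1
  have hcoeff : coeff (Finsupp.single i d) p = 1 := by
    rw [hp, Polynomial.aeval_eq_sum_range]
    rw [coeff_sum]
    have : ∀ k ∈ Finset.range (d + 1),
        coeff (Finsupp.single i d) (q.coeff k • (X i : MvPolynomial (Fin n) K) ^ k)
          = if k = d then q.coeff k else 0 := by
      intro k _
      rw [coeff_smul, X_pow_eq_monomial, coeff_monomial]
      split_ifs with h1 h2 h2
      · simp
      · exact absurd (by exact (Finsupp.single_injective i).eq_iff.mp h1 ▸ rfl : k = d) h2
      · exact absurd (h2 ▸ rfl) h1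
      · simp
    rw [Finset.sum_congr rfl this, Finset.sum_ite_eq' (Finset.range (d+1)) d]
    simp [hd, hq.coeff_natDegree]
  have hsupp : Finsupp.single i d ∈ p.support := by
    rw [mem_support_iff, hcoeff]; exact one_ne_zero
  rw [hI] at hpI
  obtain ⟨b, hbs, hb⟩ := MvPolynomial.mem_ideal_span_monomial_image.mp hpI _ hsupp
  refine ⟨d, ?_⟩
  have hbi : b = Finsupp.single i (b i) := by
    ext j
    rcases eq_or_ne j i with rfl | hj
    · simp
    · rw [Finsupp.single_apply, if_neg (Ne.symm hj)]
      have := hb j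
      rw [Finsupp.single_apply, if_neg (Ne.symm hj)] at this
      omega
  have hbid : b i ≤ d := by
    have := hb i
    simpa using this
  have hdvd : (X i : MvPolynomial (Fin n) K) ^ d
      = monomial b 1 * monomial (Finsupp.single i (d - b i)) 1 := by
    rw [monomial_mul, X_pow_eq_monomial, mul_one]
    have : b + Finsupp.single i (d - b i) = Finsupp.single i d := by
      rw [hbi, ← Finsupp.single_add]
      congr 1
      simp only [Finsupp.single_eq_same]
      omega
    rw [this]
  rw [hI, hdvd]
  exact Ideal.mul_mem_right _ _ (Ideal.subset_span ⟨b, hbs, rfl⟩)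

lemma gradedPiece_eq_bot (s : Set (Fin n →₀ ℕ))
    (hI : I = Ideal.span ((fun b => MvPolynomial.monomial b (1 : K)) '' s))
    (hart : FiniteDimensional K (MvPolynomial (Fin n) K ⧸ I)) :
    ∃ N : ℕ, ∀ j, N ≤ j → gradedPiece K I j = ⊥ := by
  choose d hd using exists_pow_mem s hI hart
  refine ⟨(∑ i : Fin n, d i) + 1, fun j hj => ?_⟩
  rw [eq_bot_iff]
  rintro x hx
  obtain ⟨p, hp, rfl⟩ := mem_gradedPiece_iff.mp hx
  simp only [Submodule.mem_bot]
  rw [Ideal.Quotient.eq_zero_iff_mem]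
  -- every monomial of p lies in I
  have hmono : ∀ m ∈ p.support, (monomial m (coeff m p) : MvPolynomial (Fin n) K) ∈ I := by
    intro m hm
    have hdeg : Finsupp.degree m = j := by
      rw [Finsupp.degree_eq_weight_one]
      exact hp (mem_support_iff.mp hm)
    have : ∃ i, d i ≤ m i := by
      by_contra hcon
      push_neg at hcon
      have h1 : Finsupp.degree m ≤ ∑ i : Fin n, m i := by
        rw [Finsupp.degree]
        exact Finset.sum_le_sum_of_subset (Finset.subset_univ _)
      have h2 : ∑ i : Fin n, m i ≤ ∑ i : Fin n, d i :=
        Finset.sum_le_sum (fun i _ => le_of_lt (hcon i))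
      omega
    obtain ⟨i, hi⟩ := this
    have hsum : Finsupp.single i (d i) + (m - Finsupp.single i (d i)) = m := by
      ext k
      rcases eq_or_ne k i with rfl | hk
      · simp only [Finsupp.add_apply, Finsupp.single_eq_same, Finsupp.tsub_apply]
        omega
      · simp only [Finsupp.add_apply, Finsupp.single_apply, if_neg (Ne.symm hk),
          Finsupp.tsub_apply]
        omega
    have : (monomial m (coeff m p) : MvPolynomial (Fin n) K)
        = X i ^ d i * monomial (m - Finsupp.single i (d i)) (coeff m p) := by
      rw [X_pow_eq_monomial, monomial_mul, one_mul, hsum]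
    rw [this]
    exact Ideal.mul_mem_right _ _ (hd i)
  rw [← support_sum_monomial_coeff p]
  exact Ideal.sum_mem _ hmono

end

section
variable {K : Type*} [Field K] {n : ℕ}

/-- The scaling substitution `X i ↦ c i • X i`. -/
noncomputable def scaleHom (c : Fin n → K) :
    MvPolynomial (Fin n) K →ₐ[K] MvPolynomial (Fin n) K :=
  aeval (fun i => C (c i) * X i)

lemma scaleHom_X (c : Fin n → K) (i : Fin n) :
    scaleHom c (X i) = C (c i) * X i := by
  simp [scaleHom]

lemma scaleHom_monomial (c : Fin n → K) (b : Fin n →₀ ℕ) (k : K) :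
    scaleHom c (monomial b k) = (∏ i ∈ b.support, c i ^ b i) • monomial b k := by
  rw [scaleHom, aeval_monomial, smul_eq_C_mul, monomial_eq, Finsupp.prod, Finsupp.prod]
  have h1 : ∀ i ∈ b.support, (C (c i) * X i : MvPolynomial (Fin n) K) ^ b i
      = C (c i ^ b i) * X i ^ b i := by
    intro i _
    rw [mul_pow, map_pow]
  rw [Finset.prod_congr rfl h1, Finset.prod_mul_distrib, ← map_prod]
  have h2 : algebraMap K (MvPolynomial (Fin n) K) k = C k := rfl
  rw [h2]
  ring

lemma scaleHom_comp_apply (c c' : Fin n → K) (p : MvPolynomial (Fin n) K) :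
    scaleHom c (scaleHom c' p) = scaleHom (fun i => c i * c' i) p := by
  have : (scaleHom c).comp (scaleHom c') = scaleHom (fun i => c i * c' i) := by
    apply MvPolynomial.algHom_ext
    intro i
    simp [scaleHom, mul_comm, mul_assoc, mul_left_comm]
  exact DFunLike.congr_fun this p

lemma scaleHom_inv_self (c : Fin n → K) (hc : ∀ i, c i ≠ 0) (p : MvPolynomial (Fin n) K) :
    scaleHom (fun i => (c i)⁻¹) (scaleHom c p) = p := by
  rw [scaleHom_comp_apply]
  have : (fun i => (c i)⁻¹ * c i) = fun _ => (1 : K) := by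
    funext i; exact inv_mul_cancel₀ (hc i)
  rw [this]
  have h1 : scaleHom (fun _ => (1:K)) = AlgHom.id K (MvPolynomial (Fin n) K) := by
    apply MvPolynomial.algHom_ext
    intro i
    simp [scaleHom]
  rw [h1, AlgHom.id_apply]

lemma scaleHom_self_inv (c : Fin n → K) (hc : ∀ i, c i ≠ 0) (p : MvPolynomial (Fin n) K) :
    scaleHom c (scaleHom (fun i => (c i)⁻¹) p) = p := by
  have := scaleHom_inv_self (fun i => (c i)⁻¹) (fun i => inv_ne_zero (hc i)) p
  simpa using this

lemma scaleHom_isHomogeneous (c : Fin n → K) {p : MvPolynomial (Fin n) K} {j : ℕ}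
    (hp : p.IsHomogeneous j) : (scaleHom c p).IsHomogeneous j := by
  rw [← mem_homogeneousSubmodule]
  rw [← support_sum_monomial_coeff p, map_sum]
  apply Submodule.sum_mem
  intro m hm
  rw [scaleHom_monomial]
  apply Submodule.smul_mem
  rw [mem_homogeneousSubmodule]
  apply isHomogeneous_monomial
  rw [Finsupp.degree_eq_weight_one]
  exact hp (mem_support_iff.mp hm)

lemma scaleHom_coeff (c : Fin n → K) (p : MvPolynomial (Fin n) K) (m : Fin n →₀ ℕ) :
    coeff m (scaleHom c p) = (∏ i ∈ m.support, c i ^ m i) * coeff m p := by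
  conv_lhs => rw [← support_sum_monomial_coeff p]
  rw [map_sum, coeff_sum]
  rcases Finset.decidableMem m p.support with hm | hm
  case _ =>
    -- m ∉ support
    rw [notMem_support_iff.mp hm, mul_zero]
    apply Finset.sum_eq_zero
    intro b hb
    rw [scaleHom_monomial, coeff_smul, coeff_monomial, if_neg, smul_zero]
    rintro rfl
    exact hm hb
  case _ =>
    rw [Finset.sum_eq_single m]
    · rw [scaleHom_monomial, coeff_smul, coeff_monomial, if_pos rfl, smul_eq_mul]
    · intro b _ hb
      rw [scaleHom_monomial, coeff_smul, coeff_monomial, if_neg hb, smul_zero]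
    · intro h; exact absurd hm h

lemma scaleHom_mem_monomial_ideal {s : Set (Fin n →₀ ℕ)} {I : Ideal (MvPolynomial (Fin n) K)}
    (hI : I = Ideal.span ((fun b => MvPolynomial.monomial b (1 : K)) '' s))
    (c : Fin n → K) {p : MvPolynomial (Fin n) K} (hp : p ∈ I) : scaleHom c p ∈ I := by
  rw [hI] at hp ⊢
  rw [MvPolynomial.mem_ideal_span_monomial_image] at hp ⊢
  intro m hm
  apply hp
  rw [mem_support_iff] at hm ⊢
  intro h0
  rw [scaleHom_coeff, h0, mul_zero] at hm
  exact hm rfl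

end

section
variable {K : Type*} [Field K] {n : ℕ} {I : Ideal (MvPolynomial (Fin n) K)}

/-- The induced scaling map on the quotient. -/
noncomputable def scaleQ (c : Fin n → K) {s : Set (Fin n →₀ ℕ)}
    (hI : I = Ideal.span ((fun b => MvPolynomial.monomial b (1 : K)) '' s)) :
    (MvPolynomial (Fin n) K ⧸ I) →ₐ[K] (MvPolynomial (Fin n) K ⧸ I) :=
  Ideal.Quotient.liftₐ I ((Ideal.Quotient.mkₐ K I).comp (scaleHom c))
    (fun a ha => by
      simp only [AlgHom.comp_apply, Ideal.Quotient.mkₐ_eq_mk]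
      rw [Ideal.Quotient.eq_zero_iff_mem]
      exact scaleHom_mem_monomial_ideal hI c ha)

lemma scaleQ_mk (c : Fin n → K) {s : Set (Fin n →₀ ℕ)}
    (hI : I = Ideal.span ((fun b => MvPolynomial.monomial b (1 : K)) '' s))
    (p : MvPolynomial (Fin n) K) :
    scaleQ c hI (Ideal.Quotient.mk I p) = Ideal.Quotient.mk I (scaleHom c p) := by
  simp [scaleQ, Ideal.Quotient.mkₐ_eq_mk]
  exact Ideal.Quotient.lift_mk _ _ _

lemma scaleQ_inv_self (c : Fin n → K) (hc : ∀ i, c i ≠ 0) {s : Set (Fin n →₀ ℕ)}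
    (hI : I = Ideal.span ((fun b => MvPolynomial.monomial b (1 : K)) '' s))
    (x : MvPolynomial (Fin n) K ⧸ I) :
    scaleQ (fun i => (c i)⁻¹) hI (scaleQ c hI x) = x := by
  obtain ⟨p, rfl⟩ := Ideal.Quotient.mk_surjective x
  rw [scaleQ_mk, scaleQ_mk, scaleHom_inv_self c hc]

lemma scaleQ_self_inv (c : Fin n → K) (hc : ∀ i, c i ≠ 0) {s : Set (Fin n →₀ ℕ)}
    (hI : I = Ideal.span ((fun b => MvPolynomial.monomial b (1 : K)) '' s))
    (x : MvPolynomial (Fin n) K ⧸ I) :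
    scaleQ c hI (scaleQ (fun i => (c i)⁻¹) hI x) = x := by
  obtain ⟨p, rfl⟩ := Ideal.Quotient.mk_surjective x
  rw [scaleQ_mk, scaleQ_mk, scaleHom_self_inv c hc]

lemma scaleQ_mem_gradedPiece (c : Fin n → K) {s : Set (Fin n →₀ ℕ)}
    (hI : I = Ideal.span ((fun b => MvPolynomial.monomial b (1 : K)) '' s))
    {j : ℕ} {x : MvPolynomial (Fin n) K ⧸ I} (hx : x ∈ gradedPiece K I j) :
    scaleQ c hI x ∈ gradedPiece K I j := by
  obtain ⟨p, hp, rfl⟩ := mem_gradedPiece_iff.mp hx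
  rw [scaleQ_mk]
  exact mem_gradedPiece_iff.mpr ⟨_, scaleHom_isHomogeneous c hp, rfl⟩

lemma scaleHom_ell (c : Fin n → K) :
    scaleHom c (∑ i : Fin n, X i) = ∑ i : Fin n, C (c i) * X i := by
  rw [map_sum]
  exact Finset.sum_congr rfl fun i _ => scaleHom_X c i

lemma scaleHom_inv_Lc (c : Fin n → K) (hc : ∀ i, c i ≠ 0) :
    scaleHom (fun i => (c i)⁻¹) (∑ i : Fin n, C (c i) * X i) = ∑ i : Fin n, X i := by
  rw [← scaleHom_ell c]
  exact scaleHom_inv_self c hc _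

lemma isHomogeneous_lin (a : Fin n → K) :
    (∑ i : Fin n, a i • X i : MvPolynomial (Fin n) K).IsHomogeneous 1 := by
  apply MvPolynomial.IsHomogeneous.sum
  intro i _
  rw [smul_eq_C_mul]
  exact (isHomogeneous_X K i).C_mul (a i)

lemma isHomogeneous_ell : (∑ i : Fin n, X i : MvPolynomial (Fin n) K).IsHomogeneous 1 :=
  MvPolynomial.IsHomogeneous.sum _ _ _ (fun i _ => isHomogeneous_X K i)

end

section
variable {K : Type*} [Field K] {n : ℕ} {I : Ideal (MvPolynomial (Fin n) K)}

lemma maxRank_torus {s : Set (Fin n →₀ ℕ)}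
    (hI : I = Ideal.span ((fun b => MvPolynomial.monomial b (1 : K)) '' s))
    (c : Fin n → K) (hc : ∀ i, c i ≠ 0)
    (h : maxRank K I (∑ i : Fin n, C (c i) * X i)) :
    maxRank K I (∑ i : Fin n, X i) := by
  intro j
  set ℓ : MvPolynomial (Fin n) K := ∑ i : Fin n, X i with hℓ
  set Lc : MvPolynomial (Fin n) K := ∑ i : Fin n, C (c i) * X i with hLc
  have hscale : scaleHom c ℓ = Lc := scaleHom_ell c
  have hscale' : scaleHom (fun i => (c i)⁻¹) Lc = ℓ := scaleHom_inv_Lc c hc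
  rcases h j with hinj | hsur
  · left
    intro x hx hmul
    have h1 : scaleQ c hI (Ideal.Quotient.mk I ℓ * x) = 0 := by rw [hmul, map_zero]
    rw [map_mul] at h1
    have h2 : scaleQ c hI (Ideal.Quotient.mk I ℓ) = Ideal.Quotient.mk I Lc := by
      rw [scaleQ_mk, hscale]
    rw [h2] at h1
    have h3 : scaleQ c hI x = 0 := hinj _ (scaleQ_mem_gradedPiece c hI hx) h1
    calc x = scaleQ (fun i => (c i)⁻¹) hI (scaleQ c hI x) := (scaleQ_inv_self c hc hI x).symm
      _ = 0 := by rw [h3, map_zero]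
  · right
    apply le_antisymm
    · exact map_mulLeft_le isHomogeneous_ell
    · intro y hy
      have h1 : scaleQ c hI y ∈ gradedPiece K I (j + 1) := scaleQ_mem_gradedPiece c hI hy
      rw [← hsur] at h1
      obtain ⟨z, hz, hz2⟩ := h1
      simp only [LinearMap.mulLeft_apply] at hz2
      refine ⟨scaleQ (fun i => (c i)⁻¹) hI z, scaleQ_mem_gradedPiece _ hI hz, ?_⟩
      simp only [LinearMap.mulLeft_apply]
      calc Ideal.Quotient.mk I ℓ * scaleQ (fun i => (c i)⁻¹) hI z
          = scaleQ (fun i => (c i)⁻¹) hI (Ideal.Quotient.mk I Lc)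
            * scaleQ (fun i => (c i)⁻¹) hI z := by rw [scaleQ_mk, hscale']
        _ = scaleQ (fun i => (c i)⁻¹) hI (Ideal.Quotient.mk I Lc * z) := by rw [map_mul]
        _ = scaleQ (fun i => (c i)⁻¹) hI (scaleQ c hI y) := by rw [hz2]
        _ = y := scaleQ_inv_self c hc hI y

end

section
variable {K : Type*} [Field K] {n : ℕ}

lemma exists_det_poly {V : Type*} [AddCommGroup V] [Module K V] [FiniteDimensional K V]
    (U : Fin n → (V →ₗ[K] V)) (a : Fin n → K)
    (ha : (∑ i : Fin n, a i • U i) = LinearMap.id) :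
    ∃ p : MvPolynomial (Fin n) K, eval a p ≠ 0 ∧
      ∀ c : Fin n → K, eval c p ≠ 0 → Function.Bijective ⇑(∑ i : Fin n, c i • U i) := by
  classical
  let b := Module.finBasis K V
  set N : Fin n → Matrix (Fin (Module.finrank K V)) (Fin (Module.finrank K V)) K :=
    fun i => LinearMap.toMatrix b b (U i) with hN
  set P : MvPolynomial (Fin n) K :=
    Matrix.det (∑ i : Fin n, (X i : MvPolynomial (Fin n) K) • (N i).map C) with hP
  have key : ∀ c : Fin n → K,
      eval c P = Matrix.det (LinearMap.toMatrix b b (∑ i : Fin n, c i • U i)) := by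
    intro c
    have h1 : (LinearMap.toMatrix b b (∑ i : Fin n, c i • U i)) = ∑ i : Fin n, c i • N i := by
      rw [map_sum]
      exact Finset.sum_congr rfl fun i _ => by rw [map_smul]
    have h2 : ((∑ i : Fin n, (X i : MvPolynomial (Fin n) K) • (N i).map C).map (eval c))
        = ∑ i : Fin n, c i • N i := by
      ext r t
      simp [Matrix.map_apply, Matrix.sum_apply, Matrix.smul_apply, smul_eq_mul]
    calc eval c P = ((∑ i : Fin n, (X i : MvPolynomial (Fin n) K) • (N i).map C).map
          (eval c)).det := (eval c : MvPolynomial (Fin n) K →+* K).map_det _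
      _ = Matrix.det (∑ i : Fin n, c i • N i) := by rw [h2]
      _ = Matrix.det (LinearMap.toMatrix b b (∑ i : Fin n, c i • U i)) := by rw [h1]
  refine ⟨P, ?_, ?_⟩
  · rw [key, ha]
    rw [LinearMap.toMatrix_id]
    simp
  · intro c hc
    rw [key] at hc
    have hu : IsUnit (LinearMap.toMatrix b b (∑ i : Fin n, c i • U i)).det :=
      isUnit_iff_ne_zero.mpr hc
    have := LinearEquiv.coe_ofIsUnitDet hu
    rw [← this]
    exact (LinearEquiv.ofIsUnitDet hu).bijective
end

section
variable {K : Type*} [Field K] {n : ℕ} (I : Ideal (MvPolynomial (Fin n) K))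

/-- Multiplication by `X i` restricted to a graded piece. -/
noncomputable def mulXr (j : ℕ) (i : Fin n) :
    ↥(gradedPiece K I j) →ₗ[K] ↥(gradedPiece K I (j + 1)) :=
  LinearMap.restrict (LinearMap.mulLeft K (Ideal.Quotient.mk I (X i)))
    (fun _ hx => mul_mem_gradedPiece (isHomogeneous_X K i) hx)

lemma mk_lin (a : Fin n → K) :
    Ideal.Quotient.mk I (∑ i : Fin n, a i • X i)
      = ∑ i : Fin n, a i • Ideal.Quotient.mk I (X i) := by
  have := map_sum (Ideal.Quotient.mkₐ K I).toLinearMap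
    (fun i : Fin n => a i • (X i : MvPolynomial (Fin n) K)) Finset.univ
  simp only [AlgHom.toLinearMap_apply, Ideal.Quotient.mkₐ_eq_mk, map_smul] at this
  simpa using this

lemma mulXr_sum_coe (j : ℕ) (a : Fin n → K) (x : ↥(gradedPiece K I j)) :
    (((∑ i : Fin n, a i • mulXr I j i) x : ↥(gradedPiece K I (j + 1))) :
        MvPolynomial (Fin n) K ⧸ I)
      = Ideal.Quotient.mk I (∑ i : Fin n, a i • X i) * (x : MvPolynomial (Fin n) K ⧸ I) := by
  rw [mk_lin]
  rw [LinearMap.sum_apply]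
  rw [AddSubmonoidClass.coe_finset_sum]
  rw [Finset.sum_mul]
  apply Finset.sum_congr rfl
  intro i _
  have hcoe : ((mulXr I j i x : ↥(gradedPiece K I (j + 1))) : MvPolynomial (Fin n) K ⧸ I)
      = Ideal.Quotient.mk I (X i) * (x : MvPolynomial (Fin n) K ⧸ I) := rfl
  rw [LinearMap.smul_apply, SetLike.val_smul, hcoe, smul_mul_assoc]

lemma bridge_inj (j : ℕ) (a : Fin n → K) :
    (∀ x ∈ gradedPiece K I j,
        Ideal.Quotient.mk I (∑ i : Fin n, a i • X i) * x = 0 → x = 0)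
      ↔ Function.Injective ⇑(∑ i : Fin n, a i • mulXr I j i) := by
  constructor
  · intro h
    rw [← LinearMap.ker_eq_bot, LinearMap.ker_eq_bot']
    intro m hm
    have h1 : (((∑ i : Fin n, a i • mulXr I j i) m :
        ↥(gradedPiece K I (j + 1))) : MvPolynomial (Fin n) K ⧸ I) = 0 := by
      rw [hm]; rfl
    rw [mulXr_sum_coe] at h1
    have := h (m : MvPolynomial (Fin n) K ⧸ I) m.2 h1
    exact Subtype.ext this
  · intro h x hx hmul
    have h1 : (∑ i : Fin n, a i • mulXr I j i) ⟨x, hx⟩ = 0 := by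
      apply Subtype.ext
      rw [mulXr_sum_coe]
      exact hmul
    have := h (by rw [h1, map_zero] : (∑ i : Fin n, a i • mulXr I j i) ⟨x, hx⟩
      = (∑ i : Fin n, a i • mulXr I j i) 0)
    exact congrArg Subtype.val this

lemma bridge_surj (j : ℕ) (a : Fin n → K) :
    (Submodule.map (LinearMap.mulLeft K (Ideal.Quotient.mk I (∑ i : Fin n, a i • X i)))
        (gradedPiece K I j) = gradedPiece K I (j + 1))
      ↔ Function.Surjective ⇑(∑ i : Fin n, a i • mulXr I j i) := by
  constructor
  · intro h y
    have hy : (y : MvPolynomial (Fin n) K ⧸ I) ∈ Submodule.map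
        (LinearMap.mulLeft K (Ideal.Quotient.mk I (∑ i : Fin n, a i • X i)))
        (gradedPiece K I j) := by
      rw [h]; exact y.2
    obtain ⟨z, hz, hz2⟩ := hy
    refine ⟨⟨z, hz⟩, ?_⟩
    apply Subtype.ext
    rw [mulXr_sum_coe]
    simpa only [LinearMap.mulLeft_apply] using hz2
  · intro h
    apply le_antisymm
    · exact map_mulLeft_le (isHomogeneous_lin a)
    · intro y hy
      obtain ⟨x, hx⟩ := h ⟨y, hy⟩
      refine ⟨(x : MvPolynomial (Fin n) K ⧸ I), x.2, ?_⟩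
      simp only [LinearMap.mulLeft_apply]
      rw [← mulXr_sum_coe, hx]

end

section
variable {K : Type*} [Field K] {n : ℕ} {I : Ideal (MvPolynomial (Fin n) K)}

set_option maxHeartbeats 1000000 in
lemma key_piece (hart : FiniteDimensional K (MvPolynomial (Fin n) K ⧸ I)) (j : ℕ)
    (a : Fin n → K)
    (h : (∀ x ∈ gradedPiece K I j,
          Ideal.Quotient.mk I (∑ i : Fin n, a i • X i) * x = 0 → x = 0) ∨
      Submodule.map (LinearMap.mulLeft K (Ideal.Quotient.mk I (∑ i : Fin n, a i • X i)))
        (gradedPiece K I j) = gradedPiece K I (j + 1)) :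
    ∃ p : MvPolynomial (Fin n) K, eval a p ≠ 0 ∧ ∀ c : Fin n → K, eval c p ≠ 0 →
      ((∀ x ∈ gradedPiece K I j,
          Ideal.Quotient.mk I (∑ i : Fin n, c i • X i) * x = 0 → x = 0) ∨
        Submodule.map (LinearMap.mulLeft K (Ideal.Quotient.mk I (∑ i : Fin n, c i • X i)))
          (gradedPiece K I j) = gradedPiece K I (j + 1)) := by
  rcases h with hinj | hsur
  · rw [bridge_inj] at hinj
    obtain ⟨π, hπ⟩ := LinearMap.exists_leftInverse_of_injective _
      (LinearMap.ker_eq_bot.mpr hinj)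
    set U : Fin n → (↥(gradedPiece K I j) →ₗ[K] ↥(gradedPiece K I j)) :=
      fun i => π.comp (mulXr I j i) with hUdef
    have hU : ∀ c : Fin n → K,
        (∑ i : Fin n, c i • U i) = π.comp (∑ i : Fin n, c i • mulXr I j i) := by
      intro c
      ext x
      simp [hUdef]
    have ha : (∑ i : Fin n, a i • U i) = LinearMap.id := by rw [hU]; exact hπ
    obtain ⟨p, hp0, hpc⟩ := exists_det_poly U a ha
    refine ⟨p, hp0, fun c hc => Or.inl ?_⟩
    rw [bridge_inj]
    have hbij := hpc c hc
    rw [hU c] at hbij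
    have hcomp : Function.Injective (⇑π ∘ ⇑(∑ i : Fin n, c i • mulXr I j i)) := by
      rw [← LinearMap.coe_comp]
      exact hbij.injective
    exact hcomp.of_comp
  · rw [bridge_surj] at hsur
    obtain ⟨σ, hσ⟩ := LinearMap.exists_rightInverse_of_surjective _
      (LinearMap.range_eq_top.mpr hsur)
    set U : Fin n → (↥(gradedPiece K I (j + 1)) →ₗ[K] ↥(gradedPiece K I (j + 1))) :=
      fun i => (mulXr I j i).comp σ with hUdef
    have hU : ∀ c : Fin n → K,
        (∑ i : Fin n, c i • U i) = (∑ i : Fin n, c i • mulXr I j i).comp σ := by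
      intro c
      ext x
      simp [hUdef]
    have ha : (∑ i : Fin n, a i • U i) = LinearMap.id := by rw [hU]; exact hσ
    obtain ⟨p, hp0, hpc⟩ := exists_det_poly U a ha
    refine ⟨p, hp0, fun c hc => Or.inr ?_⟩
    rw [bridge_surj]
    have hbij := hpc c hc
    rw [hU c] at hbij
    have hcomp : Function.Surjective (⇑(∑ i : Fin n, c i • mulXr I j i) ∘ ⇑σ) := by
      rw [← LinearMap.coe_comp]
      exact hbij.surjective
    exact hcomp.of_comp

lemma exists_good_c [Infinite K] {s : Set (Fin n →₀ ℕ)}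
    (hI : I = Ideal.span ((fun b => MvPolynomial.monomial b (1 : K)) '' s))
    (hart : FiniteDimensional K (MvPolynomial (Fin n) K ⧸ I))
    (a : Fin n → K) (h : maxRank K I (∑ i : Fin n, a i • X i)) :
    ∃ c : Fin n → K, (∀ i, c i ≠ 0) ∧ maxRank K I (∑ i : Fin n, c i • X i) := by
  obtain ⟨N, hN⟩ := gradedPiece_eq_bot s hI hart
  have key := fun j => key_piece hart j a (h j)
  choose p hp0 hpc using key
  set g : MvPolynomial (Fin n) K :=
    (∏ i : Fin n, X i) * ∏ j ∈ Finset.range N, p j with hg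
  have hgne : g ≠ 0 := by
    apply mul_ne_zero
    · exact Finset.prod_ne_zero_iff.mpr (fun i _ => MvPolynomial.X_ne_zero i)
    · refine Finset.prod_ne_zero_iff.mpr (fun j _ h0 => ?_)
      apply hp0 j
      rw [h0, map_zero]
  have hex : ∃ c : Fin n → K, eval c g ≠ 0 := by
    by_contra hcon
    push_neg at hcon
    apply hgne
    apply MvPolynomial.funext (q := 0)
    intro x
    rw [hcon x, map_zero]
  obtain ⟨c, hcg⟩ := hex
  rw [hg, map_mul, map_prod, map_prod] at hcg
  simp only [eval_X] at hcg
  have h1 : (∏ i : Fin n, c i) ≠ 0 := left_ne_zero_of_mul hcg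
  have h2 : (∏ j ∈ Finset.range N, eval c (p j)) ≠ 0 := right_ne_zero_of_mul hcg
  refine ⟨c, fun i => Finset.prod_ne_zero_iff.mp h1 i (Finset.mem_univ i), fun j => ?_⟩
  by_cases hj : j < N
  · exact hpc j c (Finset.prod_ne_zero_iff.mp h2 j (Finset.mem_range.mpr hj))
  · left
    intro x hx _
    rw [hN j (le_of_not_gt hj)] at hx
    simpa using hx

end

/-- For an Artinian monomial ideal `I ⊂ S = k[x_1,…,x_n]` over an infinite field,
`A = S/I` has the weak Lefschetz property (some linear form has maximal rank in every
degree) if and only if `ℓ = x_1 + ⋯ + x_n` is a Lefschetz element for `A`. -/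
theorem stmt17 (K : Type*) [Field K] [Infinite K] (n : ℕ)
    (I : Ideal (MvPolynomial (Fin n) K))
    (hmono : ∃ s : Set (Fin n →₀ ℕ),
      I = Ideal.span ((fun b => MvPolynomial.monomial b (1 : K)) '' s))
    (hart : FiniteDimensional K (MvPolynomial (Fin n) K ⧸ I)) :
    (∃ L ∈ MvPolynomial.homogeneousSubmodule (Fin n) K 1, maxRank K I L) ↔
      maxRank K I (∑ i : Fin n, X i) := by
  constructor
  · rintro ⟨L, hL1, hLm⟩
    obtain ⟨s, hI⟩ := hmono
    have hLd := linear_decomp hL1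
    rw [hLd] at hLm
    obtain ⟨c, hc0, hcm⟩ := exists_good_c hI hart _ hLm
    have hconv : (∑ i : Fin n, c i • X i : MvPolynomial (Fin n) K)
        = ∑ i : Fin n, C (c i) * X i :=
      Finset.sum_congr rfl fun i _ => smul_eq_C_mul _ _
    rw [hconv] at hcm
    exact maxRank_torus hI c hc0 hcm
  · intro h
    exact ⟨∑ i : Fin n, X i,
      by rw [mem_homogeneousSubmodule]; exact isHomogeneous_ell, h⟩
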